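/- The transformations ρ(φ, v; α, a): (τ, x) ↦ (τ+α, R(φ)x + v·(sin(√λ τ)/√λ) + a·cos(√λ τ)) (with sin(√λ τ)/√λ and cos(√λ τ) defined by their power series in λ, hence real for all real λ) form a group action: composing the transformation with parameters (φ1,v1;α1,a1) after (φ2,v2;α2,a2) again yields a transformation of the same form. -/

import Mathlib

/-- `cos(√λ τ)`, defined via its power series in `λ` (real for all real `λ`). -/
noncomputable def cosl (lam τ : ℝ) : ℝ :=
  if 0 ≤ lam then Real.cos (Real.sqrt lam * τ) else Real.cosh (Real.sqrt (-lam) * τ)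

/-- `sin(√λ τ)/√λ`, defined via its power series in `λ` (real for all real `λ`). -/
noncomputable def sinl (lam τ : ℝ) : ℝ :=
  if lam = 0 then τ
  else if 0 < lam then Real.sin (Real.sqrt lam * τ) / Real.sqrt lam
  else Real.sinh (Real.sqrt (-lam) * τ) / Real.sqrt (-lam)

/-- Rotation of the plane by angle `φ`. -/
noncomputable def rot (φ : ℝ) (w : ℝ × ℝ) : ℝ × ℝ :=
  (Real.cos φ * w.1 + Real.sin φ * w.2, -Real.sin φ * w.1 + Real.cos φ * w.2)

/-- The Newton-Hooke spacetime transformation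
`ρ(φ, v; α, a) : (τ, x) ↦ (τ + α, R(φ)x + sin(√λ τ)/√λ · v + cos(√λ τ) · a)`. -/
noncomputable def nhAct (lam : ℝ) (φ : ℝ) (v : ℝ × ℝ) (α : ℝ) (a : ℝ × ℝ)
    (p : ℝ × (ℝ × ℝ)) : ℝ × (ℝ × ℝ) :=
  (p.1 + α, rot φ p.2 + sinl lam p.1 • v + cosl lam p.1 • a)


lemma sinl_add (lam τ α : ℝ) :
    sinl lam (τ + α) = sinl lam τ * cosl lam α + cosl lam τ * sinl lam α := by
  rcases lt_trichotomy lam 0 with h | h | h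
  · have h0 : ¬ (0 ≤ lam) := not_le.mpr h
    have hne : lam ≠ 0 := ne_of_lt h
    have hs : Real.sqrt (-lam) ≠ 0 := ne_of_gt (Real.sqrt_pos.mpr (by linarith))
    simp only [sinl, cosl, if_neg h0, if_neg hne, if_neg (not_lt.mpr h.le)]
    rw [mul_add, Real.sinh_add]
    field_simp
  · subst h
    simp [sinl, cosl]
  · have h0 : (0:ℝ) ≤ lam := h.le
    have hne : lam ≠ 0 := ne_of_gt h
    have hs : Real.sqrt lam ≠ 0 := ne_of_gt (Real.sqrt_pos.mpr h)
    simp only [sinl, cosl, if_pos h0, if_neg hne, if_pos h]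
    rw [mul_add, Real.sin_add]
    field_simp

lemma cosl_add (lam τ α : ℝ) :
    cosl lam (τ + α) = cosl lam τ * cosl lam α - lam * (sinl lam τ * sinl lam α) := by
  rcases lt_trichotomy lam 0 with h | h | h
  · have h0 : ¬ (0 ≤ lam) := not_le.mpr h
    have hne : lam ≠ 0 := ne_of_lt h
    have hs : Real.sqrt (-lam) ≠ 0 := ne_of_gt (Real.sqrt_pos.mpr (by linarith))
    have hsq : Real.sqrt (-lam) * Real.sqrt (-lam) = -lam :=
      Real.mul_self_sqrt (by linarith)
    have hl : lam = -(Real.sqrt (-lam) * Real.sqrt (-lam)) := by rw [hsq]; ring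
    simp only [sinl, cosl, if_neg h0, if_neg hne, if_neg (not_lt.mpr h.le)]
    rw [mul_add, Real.cosh_add, hl]
    field_simp
    rw [Real.sqrt_sq (Real.sqrt_nonneg (-lam))]
    ring
  · subst h
    simp [sinl, cosl]
  · have h0 : (0:ℝ) ≤ lam := h.le
    have hne : lam ≠ 0 := ne_of_gt h
    have hs : Real.sqrt lam ≠ 0 := ne_of_gt (Real.sqrt_pos.mpr h)
    have hsq : Real.sqrt lam * Real.sqrt lam = lam := Real.mul_self_sqrt h0
    simp only [sinl, cosl, if_pos h0, if_neg hne, if_pos h]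
    rw [mul_add, Real.cos_add, ← hsq]
    field_simp
    rw [Real.sqrt_sq (Real.sqrt_nonneg lam)]
    ring

/-- composing two Newton-Hooke transformations again yields a
transformation of the same form, for every real `λ`. -/
theorem newton_hooke_transformations_closed_under_composition
    (lam φ₁ α₁ φ₂ α₂ : ℝ) (v₁ a₁ v₂ a₂ : ℝ × ℝ) :
    ∃ (φ α : ℝ) (v a : ℝ × ℝ), ∀ p : ℝ × (ℝ × ℝ),
      nhAct lam φ₁ v₁ α₁ a₁ (nhAct lam φ₂ v₂ α₂ a₂ p) = nhAct lam φ v α a p := by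
  refine ⟨φ₁ + φ₂, α₂ + α₁,
    rot φ₁ v₂ + cosl lam α₂ • v₁ + (-(lam * sinl lam α₂)) • a₁,
    rot φ₁ a₂ + sinl lam α₂ • v₁ + cosl lam α₂ • a₁,
    fun p => ?_⟩
  obtain ⟨τ, x, y⟩ := p
  obtain ⟨v₁₁, v₁₂⟩ := v₁
  obtain ⟨a₁₁, a₁₂⟩ := a₁
  obtain ⟨v₂₁, v₂₂⟩ := v₂
  obtain ⟨a₂₁, a₂₂⟩ := a₂
  simp only [nhAct, rot, Prod.smul_mk, Prod.mk_add_mk, smul_eq_mul, Prod.mk.injEq,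
    sinl_add, cosl_add, Real.cos_add, Real.sin_add]
  refine ⟨by ring, by constructor <;> ring⟩
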